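/- Let z₁, z₂, z₃ ∈ ℂ be three non-collinear points, let A₁, A₂, A₃ be the interior angles of the triangle z₁z₂z₃ at the vertices z₁, z₂, z₃ respectively, and for i ≠ j set u_{ij} := (z_j − z_i)/|z_j − z_i| (so u_{ji} = −u_{ij}). Write a := u₁₂, b := u₁₃, c := u₂₃. Then det [ [1, −(a+b), ab], [1, a−c, −ac], [1, b+c, bc] ] / (8·a·b·c) = (1/2) · ( cos²(A₁/2) + cos²(A₂/2) + cos²(A₃/2) ). (This is the formula D_∞ = ½ Σᵢ cos²(Aᵢ/2) for the normalised determinant of three points in the Euclidean plane.) -/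

import Mathlib

open Complex

private lemma unit_pair_sum (A B : ℂ) (hA : A ≠ 0) (hB : B ≠ 0) :
    A / (‖A‖ : ℂ) / (B / (‖B‖ : ℂ)) +
      B / (‖B‖ : ℂ) / (A / (‖A‖ : ℂ)) =
    ((2 * (((starRingEnd ℂ) A * B).re / (‖A‖ * ‖B‖)) : ℝ) : ℂ) := by
  have hra : (‖A‖ : ℂ) ≠ 0 := by
    exact_mod_cast norm_ne_zero_iff.mpr hA
  have hrb : (‖B‖ : ℂ) ≠ 0 := by
    exact_mod_cast norm_ne_zero_iff.mpr hB
  have hAA : (starRingEnd ℂ) A * A = ((‖A‖ : ℝ) : ℂ) ^ 2 := by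
    rw [mul_comm, Complex.mul_conj, Complex.normSq_eq_norm_sq]; push_cast; ring
  have hBB : (starRingEnd ℂ) B * B = ((‖B‖ : ℝ) : ℂ) ^ 2 := by
    rw [mul_comm, Complex.mul_conj, Complex.normSq_eq_norm_sq]; push_cast; ring
  have key : A / (‖A‖ : ℂ) / (B / (‖B‖ : ℂ)) +
      B / (‖B‖ : ℂ) / (A / (‖A‖ : ℂ)) =
      ((starRingEnd ℂ) A * B + (starRingEnd ℂ) ((starRingEnd ℂ) A * B)) /
        ((‖A‖ : ℂ) * (‖B‖ : ℂ)) := by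
    rw [map_mul, Complex.conj_conj]
    field_simp
    linear_combination (-(B ^ 2)) * hAA +
      (-(A ^ 2)) * hBB
  rw [key, Complex.add_conj]
  push_cast [Complex.div_ofReal_re]
  ring

private lemma det_expand (a b c : ℂ) (ha : a ≠ 0) (hb : b ≠ 0) (hc : c ≠ 0) :
    (Matrix.det !![1, -(a + b), a * b; 1, a - c, -(a * c); 1, b + c, b * c]) /
      (8 * a * b * c)
    = 3/4 + ((a/b + b/a) + (b/c + c/b) - (a/c + c/a))/8 := by
  have hdet : (Matrix.det !![1, -(a + b), a * b; 1, a - c, -(a * c); 1, b + c, b * c])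
      = 6*(a*b*c) + a*c^2 - b*c^2 + a^2*c + b^2*c + a*b^2 - a^2*b := by
    simp [Matrix.det_fin_three, Matrix.vecHead, Matrix.vecTail]
    ring
  rw [hdet]
  have h8 : (8:ℂ) * a * b * c ≠ 0 := by simp [ha, hb, hc]
  rw [div_eq_iff h8]
  have e1 : (a/b) * (8*a*b*c) = 8*(a^2*c) := by field_simp
  have e2 : (b/a) * (8*a*b*c) = 8*(b^2*c) := by field_simp
  have e3 : (b/c) * (8*a*b*c) = 8*(a*b^2) := by field_simp
  have e4 : (c/b) * (8*a*b*c) = 8*(a*c^2) := by field_simp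
  have e5 : (a/c) * (8*a*b*c) = 8*(a^2*b) := by field_simp
  have e6 : (c/a) * (8*a*b*c) = 8*(b*c^2) := by field_simp
  have hia : a * a⁻¹ = 1 := mul_inv_cancel₀ ha
  have hib : b * b⁻¹ = 1 := mul_inv_cancel₀ hb
  have hic : c * c⁻¹ = 1 := mul_inv_cancel₀ hc
  linear_combination (1/8 : ℂ) * (e1 + e2 + e3 + e4 - e5 - e6) +
    (2*b*c*(c-b)) * hia + (-(2*a*c*(c+a))) * hib + (2*a*b*(a-b)) * hic

theorem normalisedDet_three_points_eq_angles (z₁ z₂ z₃ : ℂ)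
    (h : ¬ Collinear ℝ ({z₁, z₂, z₃} : Set ℂ)) :
    (Matrix.det
        !![1, -(((z₂ - z₁) / (‖z₂ - z₁‖ : ℂ)) +
              ((z₃ - z₁) / (‖z₃ - z₁‖ : ℂ))),
            ((z₂ - z₁) / (‖z₂ - z₁‖ : ℂ)) *
              ((z₃ - z₁) / (‖z₃ - z₁‖ : ℂ));
          1, ((z₂ - z₁) / (‖z₂ - z₁‖ : ℂ)) -
              ((z₃ - z₂) / (‖z₃ - z₂‖ : ℂ)),
            -(((z₂ - z₁) / (‖z₂ - z₁‖ : ℂ)) *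
              ((z₃ - z₂) / (‖z₃ - z₂‖ : ℂ)));
          1, ((z₃ - z₁) / (‖z₃ - z₁‖ : ℂ)) +
              ((z₃ - z₂) / (‖z₃ - z₂‖ : ℂ)),
            ((z₃ - z₁) / (‖z₃ - z₁‖ : ℂ)) *
              ((z₃ - z₂) / (‖z₃ - z₂‖ : ℂ))]) /
      (8 * ((z₂ - z₁) / (‖z₂ - z₁‖ : ℂ)) *
        ((z₃ - z₁) / (‖z₃ - z₁‖ : ℂ)) *
        ((z₃ - z₂) / (‖z₃ - z₂‖ : ℂ)))
    = ((1 / 2 * (Real.cos (EuclideanGeometry.angle z₂ z₁ z₃ / 2) ^ 2 +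
          Real.cos (EuclideanGeometry.angle z₁ z₂ z₃ / 2) ^ 2 +
          Real.cos (EuclideanGeometry.angle z₁ z₃ z₂ / 2) ^ 2) : ℝ) : ℂ) := by
  have h12 : z₂ - z₁ ≠ 0 := by
    intro hz
    exact h (Collinear.subset (by
      intro x hx
      have hz' := sub_eq_zero.mp hz
      simp only [Set.mem_insert_iff, Set.mem_singleton_iff] at hx ⊢
      rcases hx with h'|h'|h' <;> subst h' <;> tauto) (collinear_pair ℝ z₁ z₃))
  have h13 : z₃ - z₁ ≠ 0 := by
    intro hz
    exact h (Collinear.subset (by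
      intro x hx
      have hz' := sub_eq_zero.mp hz
      simp only [Set.mem_insert_iff, Set.mem_singleton_iff] at hx ⊢
      rcases hx with h'|h'|h' <;> subst h' <;> tauto) (collinear_pair ℝ z₁ z₂))
  have h23 : z₃ - z₂ ≠ 0 := by
    intro hz
    exact h (Collinear.subset (by
      intro x hx
      have hz' := sub_eq_zero.mp hz
      simp only [Set.mem_insert_iff, Set.mem_singleton_iff] at hx ⊢
      rcases hx with h'|h'|h' <;> subst h' <;> tauto) (collinear_pair ℝ z₁ z₂))
  set a : ℂ := (z₂ - z₁) / (‖z₂ - z₁‖ : ℂ) with ha'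
  set b : ℂ := (z₃ - z₁) / (‖z₃ - z₁‖ : ℂ) with hb'
  set c : ℂ := (z₃ - z₂) / (‖z₃ - z₂‖ : ℂ) with hc'
  have ha0 : a ≠ 0 := div_ne_zero h12 (by exact_mod_cast norm_ne_zero_iff.mpr h12)
  have hb0 : b ≠ 0 := div_ne_zero h13 (by exact_mod_cast norm_ne_zero_iff.mpr h13)
  have hc0 : c ≠ 0 := div_ne_zero h23 (by exact_mod_cast norm_ne_zero_iff.mpr h23)
  have cos1 : Real.cos (EuclideanGeometry.angle z₂ z₁ z₃) =
      ((starRingEnd ℂ) (z₂ - z₁) * (z₃ - z₁)).re /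
        (‖z₂ - z₁‖ * ‖z₃ - z₁‖) := by
    rw [EuclideanGeometry.angle]
    simp only [vsub_eq_sub]
    rw [InnerProductGeometry.cos_angle, Complex.inner]
    simp only [mul_comm]
  have cos2 : Real.cos (EuclideanGeometry.angle z₁ z₂ z₃) =
      -(((starRingEnd ℂ) (z₂ - z₁) * (z₃ - z₂)).re /
        (‖z₂ - z₁‖ * ‖z₃ - z₂‖)) := by
    rw [EuclideanGeometry.angle]
    simp only [vsub_eq_sub]
    rw [InnerProductGeometry.cos_angle, Complex.inner,
      show z₁ - z₂ = -(z₂ - z₁) by ring]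
    simp only [map_neg, neg_mul, Complex.neg_re, norm_neg, neg_div, mul_neg, mul_comm]
  have cos3 : Real.cos (EuclideanGeometry.angle z₁ z₃ z₂) =
      ((starRingEnd ℂ) (z₃ - z₁) * (z₃ - z₂)).re /
        (‖z₃ - z₁‖ * ‖z₃ - z₂‖) := by
    rw [EuclideanGeometry.angle]
    simp only [vsub_eq_sub]
    rw [InnerProductGeometry.cos_angle, Complex.inner,
      show z₁ - z₃ = -(z₃ - z₁) by ring, show z₂ - z₃ = -(z₃ - z₂) by ring]
    simp only [map_neg, neg_mul, mul_neg, neg_neg, norm_neg, mul_comm]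
  have s1 := unit_pair_sum (z₂ - z₁) (z₃ - z₁) h12 h13
  have s2 := unit_pair_sum (z₂ - z₁) (z₃ - z₂) h12 h23
  have s3 := unit_pair_sum (z₃ - z₁) (z₃ - z₂) h13 h23
  rw [← ha', ← hb'] at s1
  rw [← ha', ← hc'] at s2
  rw [← hb', ← hc'] at s3
  have s1' : a / b + b / a = ((2 * Real.cos (EuclideanGeometry.angle z₂ z₁ z₃) : ℝ) : ℂ) := by
    rw [s1, cos1]
  have s2' : a / c + c / a =
      ((-(2 * Real.cos (EuclideanGeometry.angle z₁ z₂ z₃)) : ℝ) : ℂ) := by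
    rw [s2, cos2]; push_cast; ring
  have s3' : b / c + c / b = ((2 * Real.cos (EuclideanGeometry.angle z₁ z₃ z₂) : ℝ) : ℂ) := by
    rw [s3, cos3]
  have expand := det_expand a b c ha0 hb0 hc0
  rw [expand, s1', s2', s3']
  have half : ∀ x : ℝ, Real.cos (x / 2) ^ 2 = 1/2 + Real.cos x / 2 := fun x => by
    rw [Real.cos_sq, show 2 * (x / 2) = x by ring]
  rw [half, half, half]
  push_cast
  ring
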